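/- Let B be a real number and a, n integers with 1 ≤ a < n, 0 < B ≤ 1 and B < a. Then a(a+1−B) / ((a−B)(a+1)) > 1 + B / ((a+1−B)(a+n)). -/

import Mathlib

theorem stmt11 (B : ℝ) (a n : ℕ) (ha : 1 ≤ a) (han : a < n)
    (hB0 : 0 < B) (hB1 : B ≤ 1) (hBa : B < (a : ℝ)) :
    (a : ℝ) * ((a : ℝ) + 1 - B) / (((a : ℝ) - B) * ((a : ℝ) + 1))
      > 1 + B / (((a : ℝ) + 1 - B) * ((a : ℝ) + (n : ℝ))) := by
  set x : ℝ := (a : ℝ) with hxdef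
  have hx1 : (1 : ℝ) ≤ x := by rw [hxdef]; exact_mod_cast ha
  have hn : x + 1 ≤ (n : ℝ) := by rw [hxdef]; exact_mod_cast han
  have hD1 : 0 < (x - B) * (x + 1) := by nlinarith
  have hD2 : 0 < (x + 1 - B) * (x + (n : ℝ)) := by nlinarith
  have hlt : (x - B) * (x + 1) < (x + 1 - B) * (x + (n : ℝ)) := by nlinarith
  have hLHS : x * (x + 1 - B) / ((x - B) * (x + 1)) = 1 + B / ((x - B) * (x + 1)) := by
    field_simp [(sub_pos.mpr hBa).ne', (by linarith : (0:ℝ) < x + 1).ne']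
    ring
  rw [hLHS]
  have := div_lt_div_of_pos_left hB0 hD1 hlt
  linarith
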